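/- The forcing Q₀ has precaliber ω₁: for every family {p_i : i < ω₁} of ω₁ many conditions in Q₀ there is an uncountable set X ⊆ ω₁ such that any finitely many conditions from {p_i : i ∈ X} have a common lower bound in Q₀. In particular, Q₀ has the countable chain condition. -/

import Mathlib

/-- A sequence of ordinals `< Λ` of length `< Λ` (normalized to be `0` beyond
its length). -/
structure SeqLT (Λ : Ordinal) where
  len : Ordinal
  val : Ordinal → Ordinal
  len_lt : len < Λ
  val_lt : ∀ ξ < len, val ξ < Λ
  val_zero : ∀ ξ, len ≤ ξ → val ξ = 0

/-- `τ ⊴ σ`: `σ` extends `τ`. -/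
def SeqExt {Λ : Ordinal} (τ σ : SeqLT Λ) : Prop :=
  τ.len ≤ σ.len ∧ ∀ ξ < τ.len, σ.val ξ = τ.val ξ

/-- `τ ⊲ σ`: `σ` properly extends `τ`. -/
def SeqSExt {Λ : Ordinal} (τ σ : SeqLT Λ) : Prop :=
  SeqExt τ σ ∧ τ ≠ σ

/-- `σ` has successor length. -/
def IsSuccSeq {Λ : Ordinal} (σ : SeqLT Λ) : Prop :=
  ∃ β : Ordinal, σ.len = β + 1

/-- `τ` lies in the same block as `σ` and strictly to its left: `σ = ρ⌢α`,
`τ = ρ⌢β` with `β < α`. -/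
def BlockLeft {Λ : Ordinal} (τ σ : SeqLT Λ) : Prop :=
  ∃ δ : Ordinal, σ.len = δ + 1 ∧ τ.len = δ + 1 ∧
    (∀ ξ < δ, τ.val ξ = σ.val ξ) ∧ τ.val δ < σ.val δ

/-- A condition of the forcing `Q₀`: a finite partial function `p` on the set
of sequences of successor length, where `p(σ) = (s_σ, f_σ, h_σ)` consists of a
finite binary sequence `s_σ`, a finite partial function `f_σ` (promises along
the branch) and a finite partial function `h_σ` (promises within the block),
subject to the coherence conditions of Definition 3.2 of the paper.
The partial functions `f σ` and `h σ` are represented as `Option ℕ`-valued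
functions; their values are only relevant for `σ ∈ dom`. -/
structure QCond (Λ : Ordinal) where
  dom : Set (SeqLT Λ)
  dom_finite : dom.Finite
  dom_succ : ∀ σ ∈ dom, IsSuccSeq σ
  s : SeqLT Λ → List Bool
  f : SeqLT Λ → SeqLT Λ → Option ℕ
  h : SeqLT Λ → SeqLT Λ → Option ℕ
  s_mono : ∀ σ ∈ dom, ∀ τ ∈ dom, SeqSExt τ σ → (s σ).length ≤ (s τ).length
  f_dom : ∀ σ ∈ dom, ∀ τ : SeqLT Λ, (f σ τ).isSome → τ ∈ dom ∧ SeqSExt τ σ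
  f_coh : ∀ σ ∈ dom, ∀ (τ : SeqLT Λ) (k : ℕ), f σ τ = some k →
    ∀ n : ℕ, k ≤ n → n < (s τ).length → n < (s σ).length →
      (s τ).getD n false = false → (s σ).getD n false = false
  h_dom : ∀ σ ∈ dom, ∀ τ : SeqLT Λ, (h σ τ).isSome → τ ∈ dom ∧ BlockLeft τ σ
  h_coh : ∀ σ ∈ dom, ∀ (τ : SeqLT Λ) (k : ℕ), h σ τ = some k →
    ∀ n : ℕ, k ≤ n → n < (s τ).length → n < (s σ).length →
      (s τ).getD n false = false ∨ (s σ).getD n false = false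

/-- The order on `Q₀`: `q ≤ p` iff `dom p ⊆ dom q` and, for `σ ∈ dom p`,
`s^p_σ` is an initial segment of `s^q_σ`, and the promises of `q` extend
(and strengthen) those of `p`. -/
def QLE {Λ : Ordinal} (q p : QCond Λ) : Prop :=
  p.dom ⊆ q.dom ∧ ∀ σ ∈ p.dom,
    (p.s σ <+: q.s σ) ∧
    (∀ (τ : SeqLT Λ) (k : ℕ), p.f σ τ = some k → ∃ k' ≤ k, q.f σ τ = some k') ∧
    (∀ (τ : SeqLT Λ) (k : ℕ), p.h σ τ = some k → ∃ k' ≤ k, q.h σ τ = some k')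

/-- Compatibility in `Q₀`: a common lower bound exists. -/
def QCompat {Λ : Ordinal} (p q : QCond Λ) : Prop :=
  ∃ r : QCond Λ, QLE r p ∧ QLE r q


section QAux
open Cardinal Set

universe u v

namespace QAux

lemma countable_Iio {γ : Ordinal.{u}} (h : γ < (Cardinal.aleph 1).ord) :
    (Set.Iio γ).Countable := by
  rw [Cardinal.countable_iff_lt_aleph_one, Ordinal.mk_Iio_ordinal]
  have h1 : γ.card < Cardinal.aleph 1 := Cardinal.lt_ord.1 h
  have := Cardinal.lift_lt.{u, u+1}.2 h1
  calc Cardinal.lift.{u+1} γ.card < Cardinal.lift.{u+1} (Cardinal.aleph 1) := this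
    _ = Cardinal.aleph 1 := by
        rw [Cardinal.lift_aleph]; norm_num

lemma uncountable_Iio : ¬ (Set.Iio ((Cardinal.aleph 1).ord : Ordinal.{u})).Countable := by
  rw [Cardinal.countable_iff_lt_aleph_one, Ordinal.mk_Iio_ordinal]
  rw [Cardinal.card_ord, Cardinal.lift_aleph]
  norm_num

lemma exists_uncountable_fiber {C : Type v} [Countable C] {S : Set Ordinal.{u}}
    (hS : ¬ S.Countable) (φ : Ordinal.{u} → C) :
    ∃ c, ¬ {i | i ∈ S ∧ φ i = c}.Countable := by
  by_contra hcon
  push_neg at hcon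
  apply hS
  have : S ⊆ ⋃ c : C, {i | i ∈ S ∧ φ i = c} := by
    intro i hi; exact Set.mem_iUnion.2 ⟨φ i, hi, rfl⟩
  exact (Set.countable_iUnion hcon).mono this


lemma exists_free {S : Set Ordinal.{u}}
    (hS : ¬ S.Countable) (bad : Ordinal.{u} → Set Ordinal.{u})
    (hbad : ∀ i, (bad i).Countable)
    (hsymm : ∀ i ∈ S, ∀ j ∈ S, j ∈ bad i → i ∈ bad j) :
    ∃ X, X ⊆ S ∧ ¬ X.Countable ∧ ∀ i ∈ X, ∀ j ∈ X, i ≠ j → j ∉ bad i := by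
  classical
  set F : (γ : Ordinal.{u}) → ((β : Ordinal.{u}) → β < γ → Ordinal.{u}) → Ordinal.{u} :=
    fun γ ih =>
      if h : ∃ x, x ∈ S ∧ ∀ β (hβ : β < γ), x ≠ ih β hβ ∧ x ∉ bad (ih β hβ) then
        h.choose else 0 with hF
  set g : Ordinal.{u} → Ordinal.{u} := Ordinal.lt_wf.fix F with hg
  have geq : ∀ γ, g γ = F γ (fun β _ => g β) := fun γ => Ordinal.lt_wf.fix_eq F γ
  have key : ∀ γ, γ < (Cardinal.aleph 1).ord →
      g γ ∈ S ∧ ∀ β, β < γ → g γ ≠ g β ∧ g γ ∉ bad (g β) := by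
    intro γ hγ
    have hE : ∃ x, x ∈ S ∧ ∀ β (hβ : β < γ), x ≠ g β ∧ x ∉ bad (g β) := by
      have hEc : ((g '' Set.Iio γ) ∪ ⋃ β ∈ Set.Iio γ, bad (g β)).Countable :=
        ((countable_Iio hγ).image g).union
          ((countable_Iio hγ).biUnion (fun β _ => hbad _))
      have hns : ¬ S ⊆ ((g '' Set.Iio γ) ∪ ⋃ β ∈ Set.Iio γ, bad (g β)) :=
        fun hsub' => hS (hEc.mono hsub')
      obtain ⟨x, hxS, hxE⟩ := Set.not_subset.1 hns
      refine ⟨x, hxS, fun β hβ => ⟨?_, ?_⟩⟩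
      · intro hxg
        exact hxE (Set.mem_union_left _ ⟨β, hβ, hxg.symm⟩)
      · intro hxb
        exact hxE (Set.mem_union_right _ (Set.mem_biUnion hβ hxb))
    have : g γ = hE.choose := by
      rw [geq γ, hF]
      exact dif_pos hE
    rw [this]
    obtain ⟨h1, h2⟩ := hE.choose_spec
    exact ⟨h1, fun β hβ => h2 β hβ⟩
  refine ⟨g '' Set.Iio (Cardinal.aleph 1).ord, ?_, ?_, ?_⟩
  · rintro _ ⟨γ, hγ, rfl⟩; exact (key γ hγ).1
  · intro hX
    refine uncountable_Iio ?_
    refine Set.MapsTo.countable_of_injOn (Set.mapsTo_image g _) ?_ hX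
    intro β hβ γ hγ hbg
    by_contra hne
    rcases lt_or_gt_of_ne hne with h | h
    · exact ((key γ hγ).2 β h).1 hbg.symm
    · exact ((key β hβ).2 γ h).1 hbg
  · rintro _ ⟨β, hβ, rfl⟩ _ ⟨γ, hγ, rfl⟩ hne hmem
    have hβγ : β ≠ γ := by rintro rfl; exact hne rfl
    rcases lt_or_gt_of_ne hβγ with h | h
    · exact ((key γ hγ).2 β h).2 hmem
    · exact ((key β hβ).2 γ h).2 (hsymm _ (key β hβ).1 _ (key γ hγ).1 hmem)


lemma delta_system {α : Type v} [DecidableEq α] :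
    ∀ (n : ℕ) (D : Ordinal.{u} → Finset α) (S : Set Ordinal.{u}),
    ¬ S.Countable → (∀ i ∈ S, (D i).card ≤ n) →
    ∃ X R, X ⊆ S ∧ ¬ X.Countable ∧
      ∀ i ∈ X, ∀ j ∈ X, i ≠ j → D i ∩ D j = R := by
  intro n
  induction n with
  | zero =>
    intro D S hS hcard
    refine ⟨S, ∅, le_refl _, hS, fun i hi j hj _ => ?_⟩
    have : D i = ∅ := Finset.card_eq_zero.1 (Nat.le_zero.1 (hcard i hi))
    simp [this]
  | succ n IH =>
    intro D S hS hcard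
    by_cases hc : ∃ a, ¬ {i | i ∈ S ∧ a ∈ D i}.Countable
    · obtain ⟨a, ha⟩ := hc
      obtain ⟨X, R', hXsub, hXunc, hX⟩ :=
        IH (fun i => (D i).erase a) {i | i ∈ S ∧ a ∈ D i} ha
          (fun i hi => by
            rw [Finset.card_erase_of_mem hi.2]
            have := hcard i hi.1
            omega)
      refine ⟨X, insert a R', fun i hi => (hXsub hi).1, hXunc, fun i hi j hj hne => ?_⟩
      have hai : a ∈ D i := (hXsub hi).2
      have haj : a ∈ D j := (hXsub hj).2
      have herase := hX i hi j hj hne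
      ext x
      by_cases hxa : x = a
      · subst hxa
        simp [hai, haj]
      · simp only [Finset.mem_inter, Finset.mem_insert, hxa, false_or]
        rw [← herase]
        simp [Finset.mem_erase, hxa]
    · push_neg at hc
      obtain ⟨X, hXsub, hXunc, hX⟩ :=
        exists_free hS (fun i => {j | j ∈ S ∧ (D i ∩ D j).Nonempty})
          (fun i => by
            have hsub : {j | j ∈ S ∧ (D i ∩ D j).Nonempty} ⊆
                ⋃ a ∈ (D i : Set α), {j | j ∈ S ∧ a ∈ D j} := by
              rintro j ⟨hjS, x, hx⟩
              rw [Finset.mem_inter] at hx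
              exact Set.mem_biUnion hx.1 ⟨hjS, hx.2⟩
            exact (Set.Countable.biUnion ((D i).finite_toSet.countable)
              (fun a _ => hc a)).mono hsub)
          (fun i hi j hj hmem => ⟨hi, by
            obtain ⟨x, hx⟩ := hmem.2
            rw [Finset.mem_inter] at hx
            exact ⟨x, Finset.mem_inter.2 ⟨hx.2, hx.1⟩⟩⟩)
      refine ⟨X, ∅, hXsub, hXunc, fun i hi j hj hne => ?_⟩
      have := hX i hi j hj hne
      rw [Set.mem_setOf_eq] at this
      push_neg at this
      exact this (hXsub hj)


/-- padding helper facts -/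
lemma pad_getD_lt (l : List Bool) (m n : ℕ) (h : n < l.length) :
    (l ++ List.replicate m false).getD n false = l.getD n false :=
  List.getD_append _ _ _ _ h

lemma pad_getD_ge (l : List Bool) (m n : ℕ) (h : l.length ≤ n) :
    (l ++ List.replicate m false).getD n false = false := by
  rw [List.getD_append_right _ _ _ _ h]
  simp [List.getD]

lemma amalg {Λ : Ordinal} (t : Finset Ordinal) (p : Ordinal → QCond Λ)
    (hagree : ∀ i ∈ t, ∀ j ∈ t, ∀ σ, σ ∈ (p i).dom → σ ∈ (p j).dom →
      ((p i).s σ = (p j).s σ ∧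
        ∀ τ, τ ∈ (p i).dom → τ ∈ (p j).dom →
          (p i).f σ τ = (p j).f σ τ ∧ (p i).h σ τ = (p j).h σ τ)) :
    ∃ q : QCond Λ, ∀ i ∈ t, QLE q (p i) := by
  classical
  -- global bound on string lengths
  set N : ℕ := t.sup (fun i => ((p i).dom_finite.toFinset.sup
    (fun σ => ((p i).s σ).length))) with hN
  have hlen : ∀ i ∈ t, ∀ σ ∈ (p i).dom, ((p i).s σ).length ≤ N := by
    intro i hi σ hσ
    refine le_trans ?_ (Finset.le_sup (f := fun i => ((p i).dom_finite.toFinset.sup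
      (fun σ => ((p i).s σ).length))) hi)
    exact Finset.le_sup (f := fun σ => ((p i).s σ).length) (((p i).dom_finite.mem_toFinset).2 hσ)
  set pad : List Bool → List Bool :=
    fun l => l ++ List.replicate (N - l.length) false with hpad
  have pad_len : ∀ l : List Bool, l.length ≤ N → (pad l).length = N := by
    intro l hl; simp [hpad]; omega
  set Dset : Set (SeqLT Λ) := ⋃ i ∈ t, (p i).dom with hD
  set S : SeqLT Λ → List Bool := fun σ =>
    if h : ∃ i, i ∈ t ∧ σ ∈ (p i).dom then pad ((p h.choose).s σ) else [] with hS
  set F : SeqLT Λ → SeqLT Λ → Option ℕ := fun σ τ =>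
    if h : ∃ k, ∃ i, i ∈ t ∧ σ ∈ (p i).dom ∧ (p i).f σ τ = some k
    then some h.choose else none with hF
  set H : SeqLT Λ → SeqLT Λ → Option ℕ := fun σ τ =>
    if h : ∃ k, ∃ i, i ∈ t ∧ σ ∈ (p i).dom ∧ (p i).h σ τ = some k
    then some h.choose else none with hH
  -- evaluation lemmas
  have S1 : ∀ i ∈ t, ∀ σ ∈ (p i).dom, S σ = pad ((p i).s σ) := by
    intro i hi σ hσ
    have hex : ∃ j, j ∈ t ∧ σ ∈ (p j).dom := ⟨i, hi, hσ⟩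
    simp only [hS, dif_pos hex]
    obtain ⟨hjt, hjd⟩ := hex.choose_spec
    rw [(hagree _ hjt _ hi σ hjd hσ).1]
  have Slen : ∀ σ ∈ Dset, (S σ).length = N := by
    rintro σ hσ
    rw [Set.mem_iUnion₂] at hσ
    obtain ⟨i, hi, hσ⟩ := hσ
    rw [S1 i hi σ hσ]
    exact pad_len _ (hlen i hi σ hσ)
  have F1 : ∀ i ∈ t, ∀ σ ∈ (p i).dom, ∀ τ k, (p i).f σ τ = some k → F σ τ = some k := by
    intro i hi σ hσ τ k hk
    have hex : ∃ k', ∃ j, j ∈ t ∧ σ ∈ (p j).dom ∧ (p j).f σ τ = some k' := ⟨k, i, hi, hσ, hk⟩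
    simp only [hF, dif_pos hex]
    obtain ⟨j, hjt, hjd, hjv⟩ := hex.choose_spec
    -- functionality
    have hτj : τ ∈ (p j).dom := ((p j).f_dom σ hjd τ (by rw [hjv]; rfl)).1
    have hτi : τ ∈ (p i).dom := ((p i).f_dom σ hσ τ (by rw [hk]; rfl)).1
    have := ((hagree _ hjt _ hi σ hjd hσ).2 τ hτj hτi).1
    rw [this, hk] at hjv
    exact congrArg some (Option.some_injective _ hjv.symm)
  have F2 : ∀ σ τ k, F σ τ = some k → ∃ i, i ∈ t ∧ σ ∈ (p i).dom ∧ (p i).f σ τ = some k := by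
    intro σ τ k hk
    simp only [hF] at hk
    split at hk
    · next hex =>
      obtain ⟨j, hjt, hjd, hjv⟩ := hex.choose_spec
      exact ⟨j, hjt, hjd, by rw [hjv, Option.some_inj.1 hk]⟩
    · exact absurd hk (by simp)
  have H1 : ∀ i ∈ t, ∀ σ ∈ (p i).dom, ∀ τ k, (p i).h σ τ = some k → H σ τ = some k := by
    intro i hi σ hσ τ k hk
    have hex : ∃ k', ∃ j, j ∈ t ∧ σ ∈ (p j).dom ∧ (p j).h σ τ = some k' := ⟨k, i, hi, hσ, hk⟩
    simp only [hH, dif_pos hex]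
    obtain ⟨j, hjt, hjd, hjv⟩ := hex.choose_spec
    have hτj : τ ∈ (p j).dom := ((p j).h_dom σ hjd τ (by rw [hjv]; rfl)).1
    have hτi : τ ∈ (p i).dom := ((p i).h_dom σ hσ τ (by rw [hk]; rfl)).1
    have := ((hagree _ hjt _ hi σ hjd hσ).2 τ hτj hτi).2
    rw [this, hk] at hjv
    exact congrArg some (Option.some_injective _ hjv.symm)
  have H2 : ∀ σ τ k, H σ τ = some k → ∃ i, i ∈ t ∧ σ ∈ (p i).dom ∧ (p i).h σ τ = some k := by
    intro σ τ k hk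
    simp only [hH] at hk
    split at hk
    · next hex =>
      obtain ⟨j, hjt, hjd, hjv⟩ := hex.choose_spec
      exact ⟨j, hjt, hjd, by rw [hjv, Option.some_inj.1 hk]⟩
    · exact absurd hk (by simp)
  have hmemD : ∀ i ∈ t, (p i).dom ⊆ Dset := by
    intro i hi σ hσ
    exact Set.mem_iUnion₂.2 ⟨i, hi, hσ⟩
  -- the amalgamated condition
  refine ⟨⟨Dset, ?_, ?_, S, F, H, ?_, ?_, ?_, ?_, ?_⟩, ?_⟩
  · exact Set.Finite.biUnion t.finite_toSet (fun i _ => (p i).dom_finite)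
  · rintro σ hσ
    rw [Set.mem_iUnion₂] at hσ
    obtain ⟨i, hi, hσ⟩ := hσ
    exact (p i).dom_succ σ hσ
  · intro σ hσ τ hτ _
    rw [Slen σ hσ, Slen τ hτ]
  · -- f_dom
    intro σ hσ τ hsome
    rw [Option.isSome_iff_exists] at hsome
    obtain ⟨k, hk⟩ := hsome
    obtain ⟨i, hi, hid, hiv⟩ := F2 σ τ k hk
    have := (p i).f_dom σ hid τ (by rw [hiv]; rfl)
    exact ⟨hmemD i hi this.1, this.2⟩
  · -- f_coh
    intro σ hσ τ k hk n hkn hnτ hnσ hτ0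
    obtain ⟨i, hi, hid, hiv⟩ := F2 σ τ k hk
    have hdom := (p i).f_dom σ hid τ (by rw [hiv]; rfl)
    have hτd : τ ∈ (p i).dom := hdom.1
    have hmono := (p i).s_mono σ hid τ hτd hdom.2
    rw [S1 i hi σ hid] at hnσ ⊢
    rw [S1 i hi τ hτd] at hnτ hτ0
    by_cases hcase : n < ((p i).s σ).length
    · have hcaseτ : n < ((p i).s τ).length := lt_of_lt_of_le hcase hmono
      rw [pad_getD_lt _ _ _ hcaseτ] at hτ0
      rw [pad_getD_lt _ _ _ hcase]
      exact (p i).f_coh σ hid τ k hiv n hkn hcaseτ hcase hτ0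
    · exact pad_getD_ge _ _ _ (le_of_not_gt hcase)
  · -- h_dom
    intro σ hσ τ hsome
    rw [Option.isSome_iff_exists] at hsome
    obtain ⟨k, hk⟩ := hsome
    obtain ⟨i, hi, hid, hiv⟩ := H2 σ τ k hk
    have := (p i).h_dom σ hid τ (by rw [hiv]; rfl)
    exact ⟨hmemD i hi this.1, this.2⟩
  · -- h_coh
    intro σ hσ τ k hk n hkn hnτ hnσ
    obtain ⟨i, hi, hid, hiv⟩ := H2 σ τ k hk
    have hdom := (p i).h_dom σ hid τ (by rw [hiv]; rfl)
    have hτd : τ ∈ (p i).dom := hdom.1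
    rw [S1 i hi σ hid, S1 i hi τ hτd]
    by_cases hcτ : n < ((p i).s τ).length
    · by_cases hcσ : n < ((p i).s σ).length
      · rw [pad_getD_lt _ _ _ hcτ, pad_getD_lt _ _ _ hcσ]
        exact (p i).h_coh σ hid τ k hiv n hkn hcτ hcσ
      · exact Or.inr (pad_getD_ge _ _ _ (le_of_not_gt hcσ))
    · exact Or.inl (pad_getD_ge _ _ _ (le_of_not_gt hcτ))
  · -- QLE
    intro i hi
    refine ⟨hmemD i hi, fun σ hσ => ⟨?_, ?_, ?_⟩⟩
    · show (p i).s σ <+: S σ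
      rw [S1 i hi σ hσ]
      exact List.prefix_append _ _
    · intro τ k hk
      exact ⟨k, le_refl k, F1 i hi σ hσ τ k hk⟩
    · intro τ k hk
      exact ⟨k, le_refl k, H1 i hi σ hσ τ k hk⟩


lemma part1_lemma (lam : Cardinal.{u}) : ∀ p : Ordinal.{v} → QCond lam.ord,
    ∃ X : Set Ordinal, X ⊆ Set.Iio (Cardinal.aleph 1).ord ∧ ¬ X.Countable ∧
      ∀ t : Finset Ordinal, ↑t ⊆ X →
        ∃ q : QCond lam.ord, ∀ i ∈ t, QLE q (p i) := by
  classical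
  intro p
  set D : Ordinal → Finset (SeqLT lam.ord) := fun i => (p i).dom_finite.toFinset with hD
  have hDmem : ∀ i σ, σ ∈ D i ↔ σ ∈ (p i).dom := fun i σ => (p i).dom_finite.mem_toFinset
  -- uniformize cardinality
  obtain ⟨n, hn⟩ := exists_uncountable_fiber uncountable_Iio (fun i => (D i).card)
  -- delta system
  obtain ⟨X0, R, hX0sub, hX0unc, hX0⟩ :=
    delta_system n D _ hn (fun i hi => le_of_eq hi.2)
  -- constant data on the root
  obtain ⟨c, hc⟩ := exists_uncountable_fiber hX0unc
    (fun i => ((fun σ : {x // x ∈ R} => (p i).s σ.1),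
      (fun στ : {x // x ∈ R} × {x // x ∈ R} =>
        ((p i).f στ.1.1 στ.2.1, (p i).h στ.1.1 στ.2.1))))
  refine ⟨_, ?_, hc, ?_⟩
  · intro i hi
    exact (hX0sub hi.1).1
  · intro t ht
    apply amalg
    intro i hi j hj σ hσi hσj
    have hiX := ht hi
    have hjX := ht hj
    by_cases hij : i = j
    · subst hij
      exact ⟨rfl, fun τ _ _ => ⟨rfl, rfl⟩⟩
    · have hR := hX0 i hiX.1 j hjX.1 hij
      have hφ : _ = _ := hiX.2.trans hjX.2.symm
      have hσR : σ ∈ R := by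
        rw [← hR]
        exact Finset.mem_inter.2 ⟨(hDmem i σ).2 hσi, (hDmem j σ).2 hσj⟩
      constructor
      · exact congrFun (congrArg Prod.fst hφ) ⟨σ, hσR⟩
      · intro τ hτi hτj
        have hτR : τ ∈ R := by
          rw [← hR]
          exact Finset.mem_inter.2 ⟨(hDmem i τ).2 hτi, (hDmem j τ).2 hτj⟩
        have := congrFun (congrArg Prod.snd hφ) (⟨σ, hσR⟩, ⟨τ, hτR⟩)
        exact ⟨congrArg Prod.fst this, congrArg Prod.snd this⟩

end QAux
end QAux

open QAux in
/-- The forcing `Q₀` (over a regular uncountable `lam`) has precaliber `ω₁`: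
among any `ω₁` many conditions there are uncountably many which are centered
(any finitely many of them have a common lower bound). In particular, `Q₀`
has the countable chain condition. -/
theorem QCond_precaliber_omega1 (lam : Cardinal) (hreg : lam.IsRegular)
    (hunc : Cardinal.aleph0 < lam) :
    (∀ p : Ordinal → QCond lam.ord,
      ∃ X : Set Ordinal, X ⊆ Set.Iio (Cardinal.aleph 1).ord ∧ ¬ X.Countable ∧
        ∀ t : Finset Ordinal, ↑t ⊆ X →
          ∃ q : QCond lam.ord, ∀ i ∈ t, QLE q (p i)) ∧
    (∀ A : Set (QCond lam.ord),
      (∀ p ∈ A, ∀ q ∈ A, p ≠ q → ¬ QCompat p q) → A.Countable) := by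
  classical
  refine ⟨QAux.part1_lemma lam, ?_⟩
  intro A hA
  by_contra hAunc
  have hle : (Cardinal.aleph 1 : Cardinal) ≤ (Cardinal.mk A) := by
    rw [Cardinal.countable_iff_lt_aleph_one] at hAunc
    exact le_of_not_gt hAunc
  have hIio : (Cardinal.mk (Set.Iio (Cardinal.aleph 1).ord : Set Ordinal)) = Cardinal.aleph 1 := by
    rw [Ordinal.mk_Iio_ordinal, Cardinal.card_ord, Cardinal.lift_aleph]
    norm_num
  obtain ⟨g⟩ := Cardinal.le_def _ _ |>.1 (hIio ▸ hle)
  have h0 : (0 : Ordinal) ∈ Set.Iio (Cardinal.aleph 1).ord := by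
    rw [Set.mem_Iio]
    rw [Cardinal.lt_ord]
    simpa using Cardinal.aleph0_lt_aleph_one.trans_le' (by simp)
  set pf : Ordinal → QCond lam.ord := fun i =>
    if h : i ∈ Set.Iio (Cardinal.aleph 1).ord then (g ⟨i, h⟩ : A).1 else (g ⟨0, h0⟩ : A).1
    with hpf
  obtain ⟨X, hXsub, hXunc, hXcomp⟩ := QAux.part1_lemma lam pf
  have hXnt : X.Nontrivial := Set.not_subsingleton_iff.1 (fun hs => hXunc hs.countable)
  obtain ⟨i, hi, j, hj, hij⟩ := hXnt
  obtain ⟨q, hq⟩ := hXcomp {i, j} (by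
    intro x hx
    simp only [Finset.coe_insert, Finset.coe_singleton, Set.mem_insert_iff,
      Set.mem_singleton_iff] at hx
    rcases hx with rfl | rfl
    · exact hi
    · exact hj)
  have hiI : i ∈ Set.Iio (Cardinal.aleph 1).ord := hXsub hi
  have hjI : j ∈ Set.Iio (Cardinal.aleph 1).ord := hXsub hj
  have hpfi : pf i = (g ⟨i, hiI⟩ : A).1 := dif_pos hiI
  have hpfj : pf j = (g ⟨j, hjI⟩ : A).1 := dif_pos hjI
  have hne : pf i ≠ pf j := by
    rw [hpfi, hpfj]
    intro hEq
    apply hij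
    have := g.injective (Subtype.ext hEq)
    exact congrArg Subtype.val this
  refine hA (pf i) (hpfi ▸ (g ⟨i, hiI⟩).2) (pf j) (hpfj ▸ (g ⟨j, hjI⟩).2) hne ?_
  exact ⟨q, hq i (Finset.mem_insert_self i {j}), hq j (Finset.mem_insert_of_mem (Finset.mem_singleton_self j))⟩
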